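/- Let ι be a finite index set, m, n : ι → ℝ vectors with 0 ≤ m j ≤ n j for all j, and let 0 < ε ≤ 1/2 and γ ∈ (0,1] with (1−3ε) · γ > sqrt(ε). Assume (1−ε/2) · L2(n) ≤ L2(m). Let i ∈ ι, let n̂ᵢ be a real number with |n̂ᵢ − n i| ≤ (ε/8) · γ · L2(n), and let L̂ be a real number with L̂ ≥ (1−ε) · L2(m). If n̂ᵢ > γ · L̂ / (1+ε), then m i > sqrt((1−3ε)² · γ² − ε) · L2(m). (Combining the filter analysis with the window–bucket lemma: every element output by the filter is heavy in the window itself.) -/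

import Mathlib

private theorem keylem_fpwh (ε γ s t ni : ℝ) (hε0 : 0 < ε) (hγ0 : 0 < γ) (hγ1 : γ ≤ 1)
    (hε3 : ε < (1 - 3*ε)^2 * γ^2) (h3ε : 0 < 1 - 3*ε)
    (hst : s ≤ t) (hts : (1 - ε/2) * t ≤ s) (hs0 : 0 ≤ s)
    (h2 : ni * (1+ε) > γ*(1-ε)*s - (ε/8)*γ*t*(1+ε)) :
    ((1-3*ε)^2*γ^2 - ε) * s^2 < ni^2 - t^2 + s^2 := by
  have ht0 : 0 ≤ t := hs0.trans hst
  have hγt : 0 ≤ γ * t := mul_nonneg hγ0.le ht0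
  have h5 : 0 ≤ γ * (1-ε) * (s - (1 - ε/2)*t) :=
    mul_nonneg (mul_nonneg hγ0.le (by linarith)) (by linarith)
  have hBK : γ * t * (1 - 13*ε/8 + 3*ε^2/8) ≤ γ*(1-ε)*s - (ε/8)*γ*t*(1+ε) := by nlinarith
  have hKa : γ * t * ((1-3*ε)*(1+ε)) ≤ γ * t * (1 - 13*ε/8 + 3*ε^2/8) := by nlinarith
  have hBa : γ * t * ((1-3*ε)*(1+ε)) ≤ γ*(1-ε)*s - (ε/8)*γ*t*(1+ε) := hKa.trans hBK
  have hBa0 : 0 ≤ γ * t * ((1-3*ε)*(1+ε)) := by positivity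
  have hX : γ * t * ((1-3*ε)*(1+ε)) < ni * (1+ε) := lt_of_le_of_lt hBa (by linarith)
  have hni2' : (γ * t * ((1-3*ε)*(1+ε)))^2 < (ni * (1+ε))^2 :=
    pow_lt_pow_left₀ hX hBa0 (by norm_num)
  have hni2 : ni^2 * (1+ε)^2 > (γ * t * ((1-3*ε)*(1+ε)))^2 := by
    calc (γ * t * ((1-3*ε)*(1+ε)))^2 < (ni * (1+ε))^2 := hni2'
    _ = ni^2 * (1+ε)^2 := by ring
  have hmid : ((1-3*ε)^2*γ^2 - ε) * s^2 + t^2 - s^2 ≤ (1-3*ε)^2*γ^2 * t^2 := by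
    have hA : 0 ≤ (1-3*ε)^2*γ^2 - ε := by linarith
    have hts2 : ((1 - ε/2)*t)^2 ≤ s^2 :=
      pow_le_pow_left₀ (mul_nonneg (by linarith) ht0) hts 2
    have hst2 : s^2 ≤ t^2 := pow_le_pow_left₀ hs0 hst 2
    have hts2' : (1 - ε + ε^2/4) * t^2 ≤ s^2 := by
      calc (1 - ε + ε^2/4) * t^2 = ((1 - ε/2)*t)^2 := by ring
      _ ≤ s^2 := hts2
    have hAt : ((1-3*ε)^2*γ^2 - ε) * s^2 ≤ ((1-3*ε)^2*γ^2 - ε) * t^2 :=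
      mul_le_mul_of_nonneg_left hst2 hA
    have hεt : 0 ≤ (ε*t)^2 := sq_nonneg _
    nlinarith [hεt, hAt, hts2']
  have hpos : (0:ℝ) < (1+ε)^2 := by positivity
  have h6 : (((1-3*ε)^2*γ^2 - ε) * s^2 + t^2 - s^2) * (1+ε)^2 ≤ ((1-3*ε)^2*γ^2 * t^2) * (1+ε)^2 :=
    mul_le_mul_of_nonneg_right hmid hpos.le
  have h7 : (γ * t * ((1-3*ε)*(1+ε)))^2 = ((1-3*ε)^2*γ^2 * t^2) * (1+ε)^2 := by ring
  have h8 : (((1-3*ε)^2*γ^2 - ε) * s^2 + t^2 - s^2) * (1+ε)^2 < ni^2 * (1+ε)^2 := by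
    rw [h7] at hni2; linarith
  have h9 := (mul_lt_mul_iff_left₀ hpos).mp h8
  linarith

theorem filter_passers_are_window_heavy {ι : Type*} [Fintype ι]
    (m n : ι → ℝ) (hm : ∀ j, 0 ≤ m j) (hmn : ∀ j, m j ≤ n j)
    (ε γ : ℝ) (hε0 : 0 < ε) (hε1 : ε ≤ 1 / 2) (hγ0 : 0 < γ) (hγ1 : γ ≤ 1)
    (hγε : (1 - 3 * ε) * γ > Real.sqrt ε)
    (hL : (1 - ε / 2) * Real.sqrt (∑ j, (n j) ^ 2) ≤ Real.sqrt (∑ j, (m j) ^ 2))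
    (i : ι) (nhi Lhat : ℝ)
    (hest : |nhi - n i| ≤ (ε / 8) * γ * Real.sqrt (∑ j, (n j) ^ 2))
    (hLhat : Lhat ≥ (1 - ε) * Real.sqrt (∑ j, (m j) ^ 2))
    (hi : nhi > γ * Lhat / (1 + ε)) :
    m i > Real.sqrt ((1 - 3 * ε) ^ 2 * γ ^ 2 - ε) * Real.sqrt (∑ j, (m j) ^ 2) := by
  set Sm := ∑ j, (m j) ^ 2 with hSmdef
  set Sn := ∑ j, (n j) ^ 2 with hSndef
  have hSm0 : 0 ≤ Sm := Finset.sum_nonneg fun j _ => sq_nonneg _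
  have hSn0 : 0 ≤ Sn := Finset.sum_nonneg fun j _ => sq_nonneg _
  set s := Real.sqrt Sm with hsdef
  set t := Real.sqrt Sn with htdef
  have hs0 : 0 ≤ s := Real.sqrt_nonneg _
  have hs2 : s ^ 2 = Sm := Real.sq_sqrt hSm0
  have ht2 : t ^ 2 = Sn := Real.sq_sqrt hSn0
  have hSmSn : Sm ≤ Sn :=
    Finset.sum_le_sum fun j _ => pow_le_pow_left₀ (hm j) (hmn j) 2
  have hst : s ≤ t := Real.sqrt_le_sqrt hSmSn
  -- ε < 1/3 and ε < (1-3ε)²γ²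
  have hsq : 0 < Real.sqrt ε := Real.sqrt_pos.mpr hε0
  have h3ε : 0 < 1 - 3 * ε := by
    rcases le_or_gt (1 - 3 * ε) 0 with h | h
    · exfalso
      have := mul_nonpos_of_nonpos_of_nonneg h hγ0.le
      linarith
    · exact h
  have hε3 : ε < (1 - 3 * ε) ^ 2 * γ ^ 2 := by
    have h1 := pow_lt_pow_left₀ hγε (Real.sqrt_nonneg ε) (by norm_num : (2:ℕ) ≠ 0)
    rw [Real.sq_sqrt hε0.le] at h1
    calc ε < ((1 - 3 * ε) * γ) ^ 2 := h1
    _ = (1 - 3 * ε) ^ 2 * γ ^ 2 := by ring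
  -- window–bucket: m i ² ≥ n i ² − (Sn − Sm)
  have h1 : n i ^ 2 - m i ^ 2 ≤ Sn - Sm := by
    rw [hSndef, hSmdef, ← Finset.sum_sub_distrib]
    exact Finset.single_le_sum
      (f := fun j => n j ^ 2 - m j ^ 2)
      (fun j _ => sub_nonneg.mpr (pow_le_pow_left₀ (hm j) (hmn j) 2))
      (Finset.mem_univ i)
  -- lower bound on n i
  have h1ε : (0:ℝ) < 1 + ε := by linarith
  have hdivlt : γ * Lhat < nhi * (1 + ε) := (div_lt_iff₀ h1ε).mp hi
  have hestr : nhi - n i ≤ (ε / 8) * γ * t := (abs_le.mp hest).2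
  have hLγ : γ * ((1 - ε) * s) ≤ γ * Lhat := mul_le_mul_of_nonneg_left hLhat hγ0.le
  have hni : n i * (1 + ε) > γ * (1 - ε) * s - (ε / 8) * γ * t * (1 + ε) := by
    have ha : (nhi - (ε / 8) * γ * t) * (1 + ε) ≤ n i * (1 + ε) :=
      mul_le_mul_of_nonneg_right (by linarith) h1ε.le
    nlinarith
  have hkey := keylem_fpwh ε γ s t (n i) hε0 hγ0 hγ1 hε3 h3ε hst hL hs0 hni
  have hmi2 : ((1 - 3 * ε) ^ 2 * γ ^ 2 - ε) * Sm < m i ^ 2 := by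
    rw [← hs2]
    nlinarith [hkey, h1, hs2, ht2]
  have hA0 : 0 ≤ (1 - 3 * ε) ^ 2 * γ ^ 2 - ε := by linarith
  have h10 := Real.sqrt_lt_sqrt (mul_nonneg hA0 hSm0) hmi2
  rw [Real.sqrt_sq (hm i), Real.sqrt_mul hA0] at h10
  exact h10
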